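/- There exists a measurable symmetric function u on ℝ²_{>0} that is not essentially bounded below, yet the generalized 3-mean G_{2,3}(u)(x_1,x_2,x_3) = (u(x_1,x_2)+u(x_1,x_3)+u(x_2,x_3))/3 is nonnegative everywhere. -/

import Mathlib

open MeasureTheory

noncomputable def myIdx (x : ℝ) : ℤ := ⌊Real.log x⌋

noncomputable def myUZ (x y : ℝ) : ℤ :=
  if myIdx x = - myIdx y then -|myIdx y| else |myIdx x| + |myIdx y|

lemma myIdx_eq (n : ℤ) (x : ℝ) (hx : x ∈ Set.Ico (Real.exp n) (Real.exp (n + 1))) :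
    myIdx x = n := by
  unfold myIdx
  rw [Int.floor_eq_iff]
  constructor
  · calc (n : ℝ) = Real.log (Real.exp n) := (Real.log_exp _).symm
      _ ≤ Real.log x := Real.log_le_log (Real.exp_pos _) hx.1
  · calc Real.log x < Real.log (Real.exp ((n : ℝ) + 1)) :=
        Real.log_lt_log (lt_of_lt_of_le (Real.exp_pos _) hx.1) hx.2
      _ = n + 1 := Real.log_exp _

lemma key (i j k : ℤ) :
    0 ≤ (if i = -j then -|j| else |i| + |j|) + (if i = -k then -|k| else |i| + |k|)
      + (if j = -k then -|k| else |j| + |k|) := by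
  simp only [Int.abs_eq_natAbs]
  split_ifs <;> omega

lemma myUZ_symm (x y : ℝ) : myUZ x y = myUZ y x := by
  unfold myUZ
  simp only [Int.abs_eq_natAbs]
  split_ifs with h1 h2 h2 <;> omega

lemma myUZ_meas : Measurable (fun p : ℝ × ℝ => myUZ p.1 p.2) := by
  have h1 : Measurable (fun p : ℝ × ℝ => myIdx p.1) := (Real.measurable_log.floor).comp measurable_fst
  have h2 : Measurable (fun p : ℝ × ℝ => myIdx p.2) := (Real.measurable_log.floor).comp measurable_snd
  have hs : MeasurableSet {p : ℝ × ℝ | myIdx p.1 = - myIdx p.2} := by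
    have : {p : ℝ × ℝ | myIdx p.1 = - myIdx p.2} =
        ⋃ n : ℤ, ({p : ℝ × ℝ | myIdx p.1 = n} ∩ {p : ℝ × ℝ | myIdx p.2 = -n}) := by
      ext p
      simp only [Set.mem_setOf_eq, Set.mem_iUnion, Set.mem_inter_iff]
      constructor
      · intro h; exact ⟨myIdx p.1, rfl, by omega⟩
      · rintro ⟨n, h1, h2⟩; omega
    rw [this]
    exact MeasurableSet.iUnion fun n =>
      ((h1 (measurableSet_singleton n)).inter (h2 (measurableSet_singleton (-n))))
  exact Measurable.ite hs (measurable_neg.comp h2.abs) ((h1.abs).add (h2.abs))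

lemma myU_meas : Measurable (fun p : ℝ × ℝ => ((myUZ p.1 p.2 : ℤ) : ℝ)) :=
  Measurable.comp (measurable_from_top (α := ℤ)) myUZ_meas

/-- Example 2: there is a measurable symmetric function `u` on `(0,∞)²` which is not
essentially bounded below, yet its generalized 3-mean
`G_{2,3}(u)(x₁,x₂,x₃) = (u(x₁,x₂)+u(x₁,x₃)+u(x₂,x₃))/3` is everywhere nonnegative. -/
theorem exists_unbounded_below_kernel_with_nonneg_gmean :
    ∃ u : ℝ → ℝ → ℝ,
      Measurable (fun p : ℝ × ℝ => u p.1 p.2) ∧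
      (∀ x y, u x y = u y x) ∧
      (¬ ∃ c : ℝ, ∀ᵐ p : ℝ × ℝ ∂(volume.restrict (Set.Ioi 0 ×ˢ Set.Ioi 0)),
        c ≤ u p.1 p.2) ∧
      ∀ x₁ ∈ Set.Ioi (0 : ℝ), ∀ x₂ ∈ Set.Ioi (0 : ℝ), ∀ x₃ ∈ Set.Ioi (0 : ℝ),
        0 ≤ (u x₁ x₂ + u x₁ x₃ + u x₂ x₃) / 3 := by
  classical
  refine ⟨fun x y => ((myUZ x y : ℤ) : ℝ), myU_meas, ?_, ?_, ?_⟩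
  · intro x y
    show ((myUZ x y : ℤ) : ℝ) = ((myUZ y x : ℤ) : ℝ)
    exact_mod_cast myUZ_symm x y
  · rintro ⟨c, hc⟩
    obtain ⟨n, hn⟩ := exists_nat_gt (-c)
    set m : ℤ := -(n : ℤ) with hm
    set A : Set ℝ := Set.Ico (Real.exp (n : ℤ)) (Real.exp ((n : ℤ) + 1)) with hA
    set B : Set ℝ := Set.Ico (Real.exp m) (Real.exp ((m : ℝ) + 1)) with hB
    have hsub : A ×ˢ B ⊆ Set.Ioi (0:ℝ) ×ˢ Set.Ioi (0:ℝ) := by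
      rintro ⟨x, y⟩ ⟨hx, hy⟩
      exact ⟨lt_of_lt_of_le (Real.exp_pos _) hx.1, lt_of_lt_of_le (Real.exp_pos _) hy.1⟩
    have hval : ∀ p : ℝ × ℝ, p ∈ A ×ˢ B → ((myUZ p.1 p.2 : ℤ) : ℝ) < c := by
      rintro ⟨x, y⟩ ⟨hx, hy⟩
      have h1 : myIdx x = (n : ℤ) := myIdx_eq _ _ hx
      have h2 : myIdx y = m := myIdx_eq _ _ hy
      have hz : myUZ x y = -(n : ℤ) := by
        unfold myUZ
        rw [h1, h2, if_pos (by omega)]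
        simp only [Int.abs_eq_natAbs]
        omega
      simp only [hz]
      push_cast
      linarith
    have hmeas : MeasurableSet {p : ℝ × ℝ | ¬ c ≤ ((myUZ p.1 p.2 : ℤ) : ℝ)} := by
      simpa [not_le] using measurableSet_lt myU_meas measurable_const
    have h0 : (volume.restrict (Set.Ioi (0:ℝ) ×ˢ Set.Ioi (0:ℝ)))
        {p : ℝ × ℝ | ¬ c ≤ ((myUZ p.1 p.2 : ℤ) : ℝ)} = 0 := hc
    rw [Measure.restrict_apply hmeas] at h0
    have hsub2 : A ×ˢ B ⊆ {p : ℝ × ℝ | ¬ c ≤ ((myUZ p.1 p.2 : ℤ) : ℝ)} ∩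
        (Set.Ioi (0:ℝ) ×ˢ Set.Ioi (0:ℝ)) := fun p hp => ⟨not_le.mpr (hval p hp), hsub hp⟩
    have hABpos : 0 < volume (A ×ˢ B) := by
      rw [show (volume : Measure (ℝ × ℝ)) = Measure.prod volume volume from Measure.volume_eq_prod ℝ ℝ,
        Measure.prod_prod, hA, hB, Real.volume_Ico, Real.volume_Ico]
      have e1 : (0:ℝ) < Real.exp (((n : ℤ) : ℝ) + 1) - Real.exp ((n : ℤ) : ℝ) := by
        have := Real.exp_lt_exp.mpr (lt_add_one (((n : ℤ) : ℝ)))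
        linarith
      have e2 : (0:ℝ) < Real.exp ((m : ℝ) + 1) - Real.exp (m : ℝ) := by
        have := Real.exp_lt_exp.mpr (lt_add_one ((m : ℝ)))
        linarith
      exact ENNReal.mul_pos (by simp [ENNReal.ofReal_pos, e1]) (by simp [ENNReal.ofReal_pos, e2])
    have hle := measure_mono (μ := (volume : Measure (ℝ × ℝ))) hsub2
    rw [h0] at hle
    exact absurd (le_antisymm hle zero_le) (ne_of_gt hABpos)
  · intro x₁ _ x₂ _ x₃ _
    have h : (0:ℝ) ≤ ((myUZ x₁ x₂ : ℤ) : ℝ) + ((myUZ x₁ x₃ : ℤ) : ℝ) + ((myUZ x₂ x₃ : ℤ) : ℝ) := by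
      have := key (myIdx x₁) (myIdx x₂) (myIdx x₃)
      unfold myUZ
      exact_mod_cast this
    linarith
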